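/- arXiv:1503.04769 — 5 statements merged into one kernel-verified Lean document; each statement's English description precedes it below -/
import Mathlib

section
/- Consider the two-port circuit equations P₁ = g·V₁(V₁ - V₂), P₂ = g·V₂(V₂ - V₁) with conductance g > 0. Suppose P₁ > P₂ and 0 < P₁ + P₂ < P₁ - P₂. Then, setting V₀ := (P₁ - P₂)/(2√(g(P₁ + P₂))) and x := (P₁ + P₂)/(P₁ - P₂), one has 0 < x < 1, and the voltages V₁ := V₀(1 + x), V₂ := V₀(1 - x) satisfy the circuit equations with V₁ > V₂ > 0. -/
/-- For the two-port circuit with conductance `g > 0`, if `P₁ > P₂` and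
`0 < P₁ + P₂ < P₁ - P₂`, then with `V₀ = (P₁-P₂)/(2√(g(P₁+P₂)))` and
`x = (P₁+P₂)/(P₁-P₂)` one has `0 < x < 1`, and the voltages `V₁ = V₀(1+x)`,
`V₂ = V₀(1-x)` satisfy the circuit equations with `V₁ > V₂ > 0`. -/
theorem two_port_operating_point_exists
    (g P₁ P₂ : ℝ) (hg : 0 < g)
    (h12 : P₂ < P₁)
    (hpos : 0 < P₁ + P₂) (hlt : P₁ + P₂ < P₁ - P₂)
    (V₀ x V₁ V₂ : ℝ)
    (hV₀ : V₀ = (P₁ - P₂) / (2 * Real.sqrt (g * (P₁ + P₂))))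
    (hx : x = (P₁ + P₂) / (P₁ - P₂))
    (hV₁ : V₁ = V₀ * (1 + x)) (hV₂ : V₂ = V₀ * (1 - x)) :
    0 < x ∧ x < 1 ∧
    P₁ = g * V₁ * (V₁ - V₂) ∧ P₂ = g * V₂ * (V₂ - V₁) ∧
    V₂ < V₁ ∧ 0 < V₂ := by
  have hd : (0:ℝ) < P₁ - P₂ := by linarith
  set s := Real.sqrt (g * (P₁ + P₂)) with hsdef
  have hs : 0 < s := Real.sqrt_pos.mpr (by positivity)
  have hs2 : s ^ 2 = g * (P₁ + P₂) := Real.sq_sqrt (by positivity)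
  have hx0 : 0 < x := by rw [hx]; positivity
  have hx1 : x < 1 := by rw [hx]; exact (div_lt_one hd).mpr hlt
  have hV₀pos : 0 < V₀ := by rw [hV₀]; positivity
  refine ⟨hx0, hx1, ?_, ?_, ?_, ?_⟩
  · rw [hV₁, hV₂, hV₀, hx]
    field_simp
    linear_combination (4*P₁) * hs2
  · rw [hV₁, hV₂, hV₀, hx]
    field_simp
    linear_combination (4*P₂) * hs2
  · rw [hV₁, hV₂]; nlinarith
  · rw [hV₂]; nlinarith
end

section
/- Consider the two-port circuit equations P₁ = g·V₁(V₁ - V₂), P₂ = g·V₂(V₂ - V₁) with conductance g > 0. If V₁ > 0, V₂ > 0 and V₁ ≠ V₂, then the injected powers satisfy 0 < P₁ + P₂ < |P₁ - P₂|, i.e., the ratio (P₁ + P₂)/|P₁ - P₂| lies in the open interval (0,1). -/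
/-- For the two-port circuit with conductance `g > 0`, any solution with
`V₁ > 0`, `V₂ > 0` and `V₁ ≠ V₂` satisfies `0 < P₁ + P₂ < |P₁ - P₂|`. -/
theorem two_port_power_ratio_in_unit_interval
    (g P₁ P₂ V₁ V₂ : ℝ) (hg : 0 < g)
    (h1 : P₁ = g * V₁ * (V₁ - V₂))
    (h2 : P₂ = g * V₂ * (V₂ - V₁))
    (hV₁ : 0 < V₁) (hV₂ : 0 < V₂) (hne : V₁ ≠ V₂) :
    0 < P₁ + P₂ ∧ P₁ + P₂ < |P₁ - P₂| := by
  have hd : V₁ - V₂ ≠ 0 := sub_ne_zero.mpr hne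
  have habs : 0 < |V₁ - V₂| := abs_pos.mpr hd
  have hsum : P₁ + P₂ = g * (V₁ - V₂) ^ 2 := by rw [h1, h2]; ring
  have hdiff : P₁ - P₂ = g * (V₁ - V₂) * (V₁ + V₂) := by rw [h1, h2]; ring
  constructor
  · rw [hsum]; positivity
  · have hlt : |V₁ - V₂| < V₁ + V₂ := by
      rw [abs_lt]; constructor <;> nlinarith
    calc P₁ + P₂ = g * |V₁ - V₂| * |V₁ - V₂| := by
          rw [hsum, mul_assoc, ← sq_abs, sq]
      _ < g * |V₁ - V₂| * (V₁ + V₂) := by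
          apply mul_lt_mul_of_pos_left hlt; positivity
      _ = |P₁ - P₂| := by
          rw [hdiff, abs_mul, abs_mul, abs_of_pos hg,
            abs_of_pos (by linarith : (0:ℝ) < V₁ + V₂)]
end

section
/- Consider the two-port circuit equations P₁ = g·V₁(V₁ - V₂), P₂ = g·V₂(V₂ - V₁) with conductance g > 0, and suppose P₁ > P₂ and 0 < P₁ + P₂ < P₁ - P₂. Then the circuit has a unique solution with V₁ > 0 and V₂ > 0, namely V₁ = V₀(1 + x) and V₂ = V₀(1 - x) where V₀ = (P₁ - P₂)/(2√(g(P₁ + P₂))) and x = (P₁ + P₂)/(P₁ - P₂). -/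
set_option maxHeartbeats 1000000


/-- Under `P₁ > P₂` and `0 < P₁ + P₂ < P₁ - P₂`, the two-port circuit has a
unique solution with positive voltages, namely `V₁ = V₀(1+x)`, `V₂ = V₀(1-x)` with
`V₀ = (P₁-P₂)/(2√(g(P₁+P₂)))` and `x = (P₁+P₂)/(P₁-P₂)`. -/
theorem two_port_unique_positive_operating_point
    (g P₁ P₂ : ℝ) (hg : 0 < g)
    (h12 : P₂ < P₁)
    (hpos : 0 < P₁ + P₂) (hlt : P₁ + P₂ < P₁ - P₂)
    (V₀ x : ℝ)
    (hV₀ : V₀ = (P₁ - P₂) / (2 * Real.sqrt (g * (P₁ + P₂))))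
    (hx : x = (P₁ + P₂) / (P₁ - P₂)) :
    ∀ V₁ V₂ : ℝ,
      (0 < V₁ ∧ 0 < V₂ ∧ P₁ = g * V₁ * (V₁ - V₂) ∧ P₂ = g * V₂ * (V₂ - V₁)) ↔
      (V₁ = V₀ * (1 + x) ∧ V₂ = V₀ * (1 - x)) := by
  set r := Real.sqrt (g * (P₁ + P₂)) with hrdef
  have hgs : 0 < g * (P₁ + P₂) := mul_pos hg hpos
  have hr : 0 < r := Real.sqrt_pos.mpr hgs
  have hr2 : r ^ 2 = g * (P₁ + P₂) := Real.sq_sqrt hgs.le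
  have hd : 0 < P₁ - P₂ := sub_pos.mpr h12
  clear_value r
  have hV₀pos : 0 < V₀ := by rw [hV₀]; exact div_pos hd (by linarith)
  have hxlt : x < 1 := by rw [hx]; exact (div_lt_one hd).mpr hlt
  have hxpos : 0 < x := by rw [hx]; positivity
  have hV₀eq : 2 * V₀ * r = P₁ - P₂ := by
    rw [hV₀]; field_simp
  have hxeq : x * (P₁ - P₂) = P₁ + P₂ := by
    rw [hx]; field_simp
  have hA : 4 * V₀ ^ 2 * (g * (P₁ + P₂)) = (P₁ - P₂) ^ 2 := by
    rw [← hr2]; linear_combination (2 * V₀ * r + (P₁ - P₂)) * hV₀eq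
  intro V₁ V₂
  constructor
  · rintro ⟨h1, h2, hP1, hP2⟩
    have hP1pos : 0 < P₁ := by linarith
    have hsum : g * (V₁ - V₂) ^ 2 = P₁ + P₂ := by linear_combination -hP1 - hP2
    have hdiffpos : 0 < V₁ - V₂ := by
      by_contra h
      push_neg at h
      nlinarith
    have hge : g * (V₁ - V₂) = r := by
      have hz : (g * (V₁ - V₂) - r) * (g * (V₁ - V₂) + r) = 0 := by
        linear_combination g * hsum - hr2
      rcases mul_eq_zero.mp hz with h | h
      · linarith
      · linarith [mul_pos hg hdiffpos]
    have hsumV : V₁ + V₂ = 2 * V₀ := by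
      apply mul_right_cancel₀ hr.ne'
      have h4 : (V₁ + V₂) * r = P₁ - P₂ := by
        calc (V₁ + V₂) * r = (V₁ + V₂) * (g * (V₁ - V₂)) := by rw [hge]
        _ = P₁ - P₂ := by linear_combination hP2 - hP1
      rw [h4, ← hV₀eq]
    have hdiffV : V₁ - V₂ = 2 * V₀ * x := by
      apply mul_right_cancel₀ hr.ne'
      have h5 : (V₁ - V₂) * r = P₁ + P₂ := by
        calc (V₁ - V₂) * r = (V₁ - V₂) * (g * (V₁ - V₂)) := by rw [hge]
        _ = P₁ + P₂ := by linear_combination hsum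
      rw [h5, ← hxeq, ← hV₀eq]; ring
    exact ⟨by linear_combination (hsumV + hdiffV) / 2, by linear_combination (hsumV - hdiffV) / 2⟩
  · rintro ⟨h1, h2⟩
    subst h1 h2
    have hM : (0:ℝ) < (P₁ + P₂) * (P₁ - P₂) ^ 2 := by positivity
    refine ⟨mul_pos hV₀pos (by linarith), mul_pos hV₀pos (by linarith), ?_, ?_⟩
    · apply mul_left_cancel₀ hM.ne'
      linear_combination (-(((P₁ + P₂) * (P₁ - P₂) + (P₁ + P₂) ^ 2) / 2)) * hA +
        (-(2 * g * V₀ ^ 2 * (P₁ + P₂) * ((P₁ - P₂) + x * (P₁ - P₂) + (P₁ + P₂)))) * hxeq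
    · apply mul_left_cancel₀ hM.ne'
      linear_combination (((P₁ + P₂) * (P₁ - P₂) - (P₁ + P₂) ^ 2) / 2) * hA +
        (2 * g * V₀ ^ 2 * (P₁ + P₂) * ((P₁ - P₂) - x * (P₁ - P₂) - (P₁ + P₂))) * hxeq
end

section
/- Let n ≥ 2, let G be an n×n real symmetric positive semidefinite matrix with G·𝟙 = 0, and let 0 < λ₂ ≤ λₙ be such that λ₂‖x‖₂² ≤ xᵀGx ≤ λₙ‖x‖₂² for all x ∈ ℝ^n with 𝟙ᵀx = 0. Let P ∈ ℝ^n, set p := 𝟙ᵀP and P⊥ := P - (p/n)𝟙, and define Δ := (p/(‖P⊥‖₂ - p))·(λₙ/λ₂). Assume 0 < Δ < 1/2 (which entails p > 0 and ‖P⊥‖₂ > p). Define V_min := ((1-Δ)/Δ)·√(p/λ₂) > 0 and x_max := Δ/(1-Δ) < 1. Then every solution of P = diag(V)·G·V of the form V = V₀(𝟙 + x) with 𝟙ᵀx = 0 satisfies |V₀| ≥ V_min and ‖x‖_∞ ≤ x_max. -/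
set_option maxHeartbeats 1000000


open Matrix

/-- Operating Regions I: Assume `G` is symmetric PSD with `G𝟙 = 0` and
Rayleigh bounds `λ₂‖x‖₂² ≤ xᵀGx ≤ λₙ‖x‖₂²` on `𝟙^⊥`, `0 < λ₂ ≤ λₙ`. With `p = 𝟙ᵀP`,
`P⊥ = P - (p/n)𝟙`, `Δ = (p/(‖P⊥‖₂ - p))·(λₙ/λ₂) ∈ (0, 1/2)`,
`V_min = ((1-Δ)/Δ)√(p/λ₂)` and `x_max = Δ/(1-Δ)`, every solution of
`P = diag(V)GV` of the form `V = V₀(𝟙 + x)` with `𝟙ᵀx = 0` satisfies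
`|V₀| ≥ V_min` and `‖x‖_∞ ≤ x_max`. -/
theorem operating_regions_I
    (n : ℕ) (hn : 2 ≤ n)
    (G : Matrix (Fin n) (Fin n) ℝ)
    (hG : G.PosSemidef)
    (hG1 : G.mulVec (fun _ => (1 : ℝ)) = 0)
    (lam2 lamn : ℝ) (hlam2 : 0 < lam2) (hle : lam2 ≤ lamn)
    (hray : ∀ y : Fin n → ℝ, ∑ i, y i = 0 →
      lam2 * (∑ i, y i ^ 2) ≤ y ⬝ᵥ G.mulVec y ∧
      y ⬝ᵥ G.mulVec y ≤ lamn * (∑ i, y i ^ 2))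
    (P : Fin n → ℝ) (p : ℝ) (hp : p = ∑ i, P i)
    (Pperp : Fin n → ℝ) (hPperp : Pperp = P - (p / n) • (fun _ => (1 : ℝ)))
    (Δ : ℝ) (hΔdef : Δ = p / (Real.sqrt (∑ i, Pperp i ^ 2) - p) * (lamn / lam2))
    (hΔpos : 0 < Δ) (hΔlt : Δ < 1 / 2)
    (Vmin xmax : ℝ)
    (hVmin : Vmin = (1 - Δ) / Δ * Real.sqrt (p / lam2))
    (hxmax : xmax = Δ / (1 - Δ)) :
    ∀ (V₀ : ℝ) (x : Fin n → ℝ), ∑ i, x i = 0 →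
      P = (V₀ • ((fun _ => (1 : ℝ)) + x)) * G.mulVec (V₀ • ((fun _ => (1 : ℝ)) + x)) →
      Vmin ≤ |V₀| ∧ ∀ i, |x i| ≤ xmax := by
  intro V₀ x hx hsol
  have hlamn : 0 < lamn := lt_of_lt_of_le hlam2 hle
  set g : Fin n → ℝ := G.mulVec x with hg
  -- entrywise symmetry
  have hsym : ∀ i j, G i j = G j i := by
    intro i j
    have := congrFun (congrFun hG.1 j) i
    simpa [Matrix.conjTranspose_apply] using this
  have hpsd : ∀ y : Fin n → ℝ, 0 ≤ y ⬝ᵥ G.mulVec y := by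
    intro y; simpa using hG.dotProduct_mulVec_nonneg y
  have hGsymm : ∀ u v : Fin n → ℝ, u ⬝ᵥ G.mulVec v = v ⬝ᵥ G.mulVec u := by
    intro u v
    simp only [Matrix.mulVec, dotProduct, Finset.mul_sum]
    rw [Finset.sum_comm]
    refine Finset.sum_congr rfl fun j _ => Finset.sum_congr rfl fun i _ => ?_
    rw [hsym i j]; ring
  have hrow : ∀ i, ∑ j, G i j = 0 := by
    intro i
    have := congrFun hG1 i
    simpa [Matrix.mulVec, dotProduct] using this
  have hsum_g : ∑ i, g i = 0 := by
    rw [hg]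
    simp only [Matrix.mulVec, dotProduct]
    rw [Finset.sum_comm]
    have : ∀ j, ∑ i, G i j * x j = 0 := by
      intro j
      rw [← Finset.sum_mul]
      have h0 : ∑ i, G i j = 0 := by
        rw [Finset.sum_congr rfl fun i _ => hsym i j]
        exact hrow j
      rw [h0, zero_mul]
    simp [this]
  -- the solved equation entrywise
  have hmv : G.mulVec (V₀ • ((fun _ => (1 : ℝ)) + x)) = V₀ • g := by
    rw [Matrix.mulVec_smul, Matrix.mulVec_add, hG1, zero_add, hg]
  have hPi : ∀ i, P i = V₀ ^ 2 * ((1 + x i) * g i) := by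
    intro i
    have h := congrFun hsol i
    rw [hmv] at h
    simp only [Pi.mul_apply, Pi.smul_apply, Pi.add_apply, smul_eq_mul] at h
    rw [h]; ring
  set Q : ℝ := x ⬝ᵥ g with hQdef
  set s2 : ℝ := ∑ i, x i ^ 2 with hs2def
  have hpQ : p = V₀ ^ 2 * Q := by
    rw [hp, Finset.sum_congr rfl fun i _ => hPi i, ← Finset.mul_sum]
    have : ∑ i, (1 + x i) * g i = Q := by
      have : ∀ i, (1 + x i) * g i = g i + x i * g i := fun i => by ring
      rw [Finset.sum_congr rfl fun i _ => this i, Finset.sum_add_distrib, hsum_g, zero_add,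
        hQdef]
      simp [dotProduct]
    rw [this]
  obtain ⟨hQ1, hQ2⟩ := hray x hx
  rw [← hs2def, ← hg, ← hQdef] at hQ1 hQ2
  have hs2nn : 0 ≤ s2 := Finset.sum_nonneg fun i _ => sq_nonneg _
  have hQ0 : 0 ≤ Q := le_trans (by positivity) hQ1
  -- p > 0
  have hppos : 0 < p := by
    rcases lt_or_eq_of_le (show 0 ≤ p by rw [hpQ]; positivity) with h | h
    · exact h
    · exfalso
      rw [← h] at hΔdef
      simp at hΔdef
      rw [hΔdef] at hΔpos
      exact lt_irrefl _ hΔpos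
  set K : ℝ := Real.sqrt (∑ i, Pperp i ^ 2) with hKdef
  have hKp : 0 < K - p := by
    rcases lt_trichotomy (K - p) 0 with h | h | h
    · exfalso
      have : Δ < 0 := by
        rw [hΔdef]
        exact mul_neg_of_neg_of_pos (div_neg_of_pos_of_neg hppos h) (by positivity)
      linarith
    · exfalso
      rw [hΔdef, h] at hΔpos
      simp at hΔpos
    · exact h
  have hΔK : Δ * ((K - p) * lam2) = p * lamn := by
    rw [hΔdef]
    field_simp
  have hQpos : 0 < Q := by nlinarith only [hppos, hpQ, sq_nonneg V₀]
  have hV2 : 0 < V₀ ^ 2 := by nlinarith only [hppos, hpQ, hQpos, sq_nonneg V₀]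
  have hs2pos : 0 < s2 := by nlinarith only [hQ2, hQpos, hlamn]
  set s : ℝ := Real.sqrt s2 with hsdef
  have hspos : 0 < s := Real.sqrt_pos.2 hs2pos
  have hss : s ^ 2 = s2 := Real.sq_sqrt hs2nn
  have habs : ∀ i, |x i| ≤ s := by
    intro i
    rw [hsdef, ← Real.sqrt_sq_eq_abs]
    exact Real.sqrt_le_sqrt (Finset.single_le_sum (f := fun i => x i ^ 2)
      (fun i _ => sq_nonneg _) (Finset.mem_univ i))
  -- Cauchy-Schwarz for the form G
  have hCS : (g ⬝ᵥ G.mulVec x) ^ 2 ≤ (g ⬝ᵥ G.mulVec g) * (x ⬝ᵥ G.mulVec x) := by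
    have hq : ∀ r : ℝ, 0 ≤ (x ⬝ᵥ G.mulVec x) * (r * r) + 2 * (g ⬝ᵥ G.mulVec x) * r
        + g ⬝ᵥ G.mulVec g := by
      intro r
      have h0 : 0 ≤ (g + r • x) ⬝ᵥ G.mulVec (g + r • x) := hpsd _
      have hb : x ⬝ᵥ G.mulVec g = g ⬝ᵥ G.mulVec x := hGsymm x g
      simp only [Matrix.mulVec_add, Matrix.mulVec_smul, dotProduct_add, add_dotProduct,
        dotProduct_smul, smul_dotProduct, smul_eq_mul] at h0
      rw [hb] at h0
      ring_nf at h0 ⊢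
      linarith only [h0]
    have hd := discrim_le_zero hq
    rw [discrim] at hd
    nlinarith only [hd]
  set S : ℝ := ∑ i, g i ^ 2 with hSdef
  have hSnn : 0 ≤ S := Finset.sum_nonneg fun i _ => sq_nonneg _
  have hgg : g ⬝ᵥ G.mulVec x = S := by
    rw [← hg, hSdef]
    simp [dotProduct, sq]
  have hray_g := (hray g hsum_g).2
  rw [← hSdef] at hray_g
  have hSbound : S ≤ (lamn * s) ^ 2 := by
    rcases eq_or_lt_of_le hSnn with h | h
    · rw [← h]; positivity
    · rw [hgg] at hCS
      rw [← hQdef] at hCS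
      have h1 : g ⬝ᵥ G.mulVec g * Q ≤ lamn * S * (lamn * s2) :=
        mul_le_mul hray_g hQ2 hQ0 (by positivity)
      have h2 : S * S ≤ (lamn * s) ^ 2 * S := by
        rw [← sq, mul_pow, hss]
        calc S ^ 2 ≤ g ⬝ᵥ G.mulVec g * Q := hCS
        _ ≤ lamn * S * (lamn * s2) := h1
        _ = lamn ^ 2 * s2 * S := by ring
      exact le_of_mul_le_mul_right h2 h
  have hgb : Real.sqrt S ≤ lamn * s := by
    calc Real.sqrt S ≤ Real.sqrt ((lamn * s) ^ 2) := Real.sqrt_le_sqrt hSbound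
    _ = lamn * s := Real.sqrt_sq (by positivity)
  -- bound on ‖P‖
  have hPsum : ∑ i, P i ^ 2 ≤ (V₀ ^ 2 * (1 + s)) ^ 2 * S := by
    rw [hSdef, Finset.mul_sum]
    refine Finset.sum_le_sum fun i _ => ?_
    rw [hPi i]
    have h1 : |1 + x i| ≤ 1 + s := by
      calc |1 + x i| ≤ |(1 : ℝ)| + |x i| := abs_add_le _ _
      _ ≤ 1 + s := by rw [abs_one]; linarith [habs i]
    have h2 : (1 + x i) ^ 2 ≤ (1 + s) ^ 2 := by
      rw [← sq_abs (1 + x i)]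
      exact pow_le_pow_left₀ (abs_nonneg _) h1 2
    calc (V₀ ^ 2 * ((1 + x i) * g i)) ^ 2
        = (1 + x i) ^ 2 * ((V₀ ^ 2) ^ 2 * g i ^ 2) := by ring
    _ ≤ (1 + s) ^ 2 * ((V₀ ^ 2) ^ 2 * g i ^ 2) :=
        mul_le_mul_of_nonneg_right h2 (by positivity)
    _ = (V₀ ^ 2 * (1 + s)) ^ 2 * g i ^ 2 := by ring
  have hNP : Real.sqrt (∑ i, P i ^ 2) ≤ V₀ ^ 2 * (1 + s) * (lamn * s) := by
    have h1 : Real.sqrt (∑ i, P i ^ 2) ≤ Real.sqrt ((V₀ ^ 2 * (1 + s)) ^ 2 * S) :=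
      Real.sqrt_le_sqrt hPsum
    rw [Real.sqrt_mul (sq_nonneg _), Real.sqrt_sq (by positivity)] at h1
    calc Real.sqrt (∑ i, P i ^ 2) ≤ V₀ ^ 2 * (1 + s) * Real.sqrt S := h1
    _ ≤ V₀ ^ 2 * (1 + s) * (lamn * s) := by
        apply mul_le_mul_of_nonneg_left hgb
        positivity
  -- K ≤ ‖P‖
  have hKle : K ≤ Real.sqrt (∑ i, P i ^ 2) := by
    apply Real.sqrt_le_sqrt
    have hne : (n : ℝ) ≠ 0 := by positivity
    have hPperp' : ∀ i, Pperp i = P i - p / n := by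
      intro i; rw [hPperp]; simp
    have : ∑ i, Pperp i ^ 2 = (∑ i, P i ^ 2) - p ^ 2 / n := by
      rw [Finset.sum_congr rfl fun i _ => by rw [hPperp' i]]
      have expand : ∀ i, (P i - p / n) ^ 2 = P i ^ 2 - 2 * (p / n) * P i + (p / n) ^ 2 :=
        fun i => by ring
      rw [Finset.sum_congr rfl fun i _ => expand i]
      rw [Finset.sum_add_distrib, Finset.sum_sub_distrib, ← Finset.mul_sum, ← hp,
        Finset.sum_const, Finset.card_fin, nsmul_eq_mul]
      field_simp
      ring
    rw [this]
    have : 0 ≤ p ^ 2 / n := by positivity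
    linarith
  -- main chain
  have hmain : p * lamn ≤ Δ * lam2 * (V₀ ^ 2 * (1 + s) * (lamn * s)) := by
    have h1 : K - p ≤ V₀ ^ 2 * (1 + s) * (lamn * s) := by
      have := le_trans hKle hNP
      linarith only [this, hppos]
    calc p * lamn = Δ * ((K - p) * lam2) := hΔK.symm
    _ ≤ Δ * (V₀ ^ 2 * (1 + s) * (lamn * s) * lam2) := by
        apply mul_le_mul_of_nonneg_left _ (le_of_lt hΔpos)
        exact mul_le_mul_of_nonneg_right h1 (le_of_lt hlam2)
    _ = Δ * lam2 * (V₀ ^ 2 * (1 + s) * (lamn * s)) := by ring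
  -- x bound
  have hsle : s ≤ Δ * (1 + s) := by
    have h2 : lam2 * (V₀ ^ 2 * s2) ≤ p := by
      rw [hpQ]
      calc lam2 * (V₀ ^ 2 * s2) = V₀ ^ 2 * (lam2 * s2) := by ring
      _ ≤ V₀ ^ 2 * Q := mul_le_mul_of_nonneg_left hQ1 (sq_nonneg V₀)
    have hfac : 0 < lam2 * V₀ ^ 2 * lamn * s := by positivity
    have h3 : lam2 * V₀ ^ 2 * lamn * s * s ≤ lam2 * V₀ ^ 2 * lamn * s * (Δ * (1 + s)) := by
      have e1 : lam2 * V₀ ^ 2 * lamn * s * s = lam2 * (V₀ ^ 2 * s2) * lamn := by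
        rw [← hss]; ring
      have e2 : lam2 * V₀ ^ 2 * lamn * s * (Δ * (1 + s)) =
          Δ * lam2 * (V₀ ^ 2 * (1 + s) * (lamn * s)) := by ring
      rw [e1, e2]
      calc lam2 * (V₀ ^ 2 * s2) * lamn ≤ p * lamn :=
        mul_le_mul_of_nonneg_right h2 (le_of_lt hlamn)
      _ ≤ _ := hmain
    exact le_of_mul_le_mul_left h3 hfac
  have h1Δ : 0 < 1 - Δ := by linarith
  have hsx : s ≤ xmax := by
    rw [hxmax, le_div_iff₀ h1Δ]
    have e : s * (1 - Δ) = s - Δ * (1 + s) + Δ := by ring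
    rw [e]; linarith only [hsle]
  constructor
  · -- V₀ bound
    set a : ℝ := |V₀| with hadef
    have ha : 0 ≤ a := abs_nonneg _
    have hV2a : V₀ ^ 2 = a ^ 2 := (sq_abs V₀).symm
    set t : ℝ := Real.sqrt (p / lam2) with htdef
    have htpos : 0 < t := Real.sqrt_pos.2 (by positivity)
    have ht2 : t ^ 2 = p / lam2 := Real.sq_sqrt (by positivity)
    have hpt : p = lam2 * t ^ 2 := by rw [ht2]; field_simp
    have hVs : V₀ ^ 2 * s ^ 2 ≤ t ^ 2 := by
      rw [ht2, hss, le_div_iff₀ hlam2]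
      calc V₀ ^ 2 * s2 * lam2 = V₀ ^ 2 * (lam2 * s2) := by ring
      _ ≤ V₀ ^ 2 * Q := mul_le_mul_of_nonneg_left hQ1 (sq_nonneg V₀)
      _ = p := hpQ.symm
    have has : a * s ≤ t := by
      have h0 : 0 ≤ a * s := mul_nonneg ha hspos.le
      have hsq : (a * s) ^ 2 ≤ t ^ 2 := by rw [mul_pow, ← hV2a]; exact hVs
      calc a * s = Real.sqrt ((a * s) ^ 2) := (Real.sqrt_sq h0).symm
      _ ≤ Real.sqrt (t ^ 2) := Real.sqrt_le_sqrt hsq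
      _ = t := Real.sqrt_sq htpos.le
    have hp3 : p ≤ Δ * lam2 * ((1 + s) * (a * t)) := by
      have step2 : a ^ 2 * s ≤ a * t := by
        calc a ^ 2 * s = a * (a * s) := by ring
        _ ≤ a * t := mul_le_mul_of_nonneg_left has ha
      have he : Δ * lam2 * (V₀ ^ 2 * (1 + s) * (lamn * s)) =
          lamn * (Δ * lam2 * ((1 + s) * (a ^ 2 * s))) := by rw [hV2a]; ring
      rw [he] at hmain
      have h4 : p ≤ Δ * lam2 * ((1 + s) * (a ^ 2 * s)) :=
        le_of_mul_le_mul_left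
          (by linarith only [hmain] : lamn * p ≤ lamn * (Δ * lam2 * ((1 + s) * (a ^ 2 * s)))) hlamn
      have h5 : Δ * lam2 * ((1 + s) * (a ^ 2 * s)) ≤ Δ * lam2 * ((1 + s) * (a * t)) := by
        apply mul_le_mul_of_nonneg_left _ (by positivity)
        exact mul_le_mul_of_nonneg_left step2 (by linarith only [hspos])
      linarith only [h4, h5]
    have h1s : (1 + s) * (1 - Δ) ≤ 1 := by
      have e : (1 + s) * (1 - Δ) = 1 + (s - Δ * (1 + s)) := by ring
      rw [e]; linarith only [hsle]
    have hp4 : p * (1 - Δ) ≤ Δ * lam2 * (a * t) := by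
      have hat : 0 ≤ a * t := mul_nonneg ha htpos.le
      calc p * (1 - Δ) ≤ Δ * lam2 * ((1 + s) * (a * t)) * (1 - Δ) :=
        mul_le_mul_of_nonneg_right hp3 h1Δ.le
      _ = Δ * lam2 * (a * t) * ((1 + s) * (1 - Δ)) := by ring
      _ ≤ Δ * lam2 * (a * t) * 1 := mul_le_mul_of_nonneg_left h1s (by positivity)
      _ = Δ * lam2 * (a * t) := mul_one _
    rw [hVmin, div_mul_eq_mul_div, div_le_iff₀ hΔpos]
    rw [hpt] at hp4
    have hl2t : 0 < lam2 * t := by positivity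
    have hfin : (1 - Δ) * t * (lam2 * t) ≤ a * Δ * (lam2 * t) := by linarith only [hp4]
    exact le_of_mul_le_mul_right hfin hl2t
  · intro i
    exact le_trans (habs i) hsx
end

section
/- Let n ≥ 1, let 0 < λ₂ ≤ λₙ, p > 0, V₀ > 0, and let r ≥ 0 and Q ≥ 0 be real numbers such that Q ≤ V₀²·λₙ·(r + r²) + p/√n and r ≤ (1/V₀)·√(p/λ₂). Then V₀ ≥ √(p/λ₂)·(λ₂/λₙ)·(Q/p - λₙ/λ₂ - 1/√n), and hence also V₀ ≥ √(p/λ₂)·((λ₂/λₙ)·(Q/p - 1) - 1). -/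
/-- Algebraic core of the lower bound on the nominal voltage level:
if `Q ≤ V₀²λₙ(r + r²) + p/√n` and `r ≤ (1/V₀)√(p/λ₂)` with `0 < λ₂ ≤ λₙ`, `p > 0`,
`V₀ > 0`, `r ≥ 0`, `Q ≥ 0`, then
`V₀ ≥ √(p/λ₂)·(λ₂/λₙ)·(Q/p - λₙ/λ₂ - 1/√n)` and hence
`V₀ ≥ √(p/λ₂)·((λ₂/λₙ)(Q/p - 1) - 1)`. -/
theorem voltage_lower_bound_algebra
    (n : ℕ) (hn : 1 ≤ n)
    (lam2 lamn p V₀ r Q : ℝ)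
    (hlam2 : 0 < lam2) (hle : lam2 ≤ lamn)
    (hp : 0 < p) (hV₀ : 0 < V₀) (hr : 0 ≤ r) (hQ : 0 ≤ Q)
    (hQb : Q ≤ V₀ ^ 2 * lamn * (r + r ^ 2) + p / Real.sqrt n)
    (hrb : r ≤ (1 / V₀) * Real.sqrt (p / lam2)) :
    Real.sqrt (p / lam2) * (lam2 / lamn) * (Q / p - lamn / lam2 - 1 / Real.sqrt n) ≤ V₀ ∧
    Real.sqrt (p / lam2) * ((lam2 / lamn) * (Q / p - 1) - 1) ≤ V₀ := by
  set s := Real.sqrt (p / lam2) with hs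
  have hpl : 0 < p / lam2 := div_pos hp hlam2
  have hs0 : 0 < s := Real.sqrt_pos.mpr hpl
  have hs2 : s ^ 2 = p / lam2 := Real.sq_sqrt hpl.le
  have hsn : (1:ℝ) ≤ Real.sqrt n := by
    rw [show (1:ℝ) = Real.sqrt 1 by simp]
    exact Real.sqrt_le_sqrt (by exact_mod_cast hn)
  have hn0 : 0 < Real.sqrt n := lt_of_lt_of_le one_pos hsn
  have hlamn : 0 < lamn := lt_of_lt_of_le hlam2 hle
  have hsp : s ^ 2 * lam2 = p := by
    rw [hs2]; field_simp
  have h1 : V₀ * r ≤ s := by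
    have h := mul_le_mul_of_nonneg_left hrb hV₀.le
    calc V₀ * r ≤ V₀ * (1 / V₀ * s) := h
    _ = s := by field_simp
  have h2 : V₀ ^ 2 * r ^ 2 ≤ s ^ 2 := by
    nlinarith [mul_le_mul h1 h1 (mul_nonneg hV₀.le hr) hs0.le]
  have hQ2 : Q ≤ lamn * (V₀ * s) + lamn * s ^ 2 + p / Real.sqrt n := by
    have hA : lamn * (V₀ ^ 2 * r) ≤ lamn * (V₀ * s) :=
      mul_le_mul_of_nonneg_left (by nlinarith) hlamn.le
    have hB : lamn * (V₀ ^ 2 * r ^ 2) ≤ lamn * s ^ 2 :=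
      mul_le_mul_of_nonneg_left h2 hlamn.le
    nlinarith [hA, hB]
  have hpn : p / Real.sqrt n * Real.sqrt n = p := div_mul_cancel₀ _ (ne_of_gt hn0)
  have main : s * lam2 * Real.sqrt n * Q ≤
      V₀ * lamn * Real.sqrt n * p + s * lamn * Real.sqrt n * p + s * lam2 * p := by
    have h := mul_le_mul_of_nonneg_left hQ2
      (by positivity : (0:ℝ) ≤ s * lam2 * Real.sqrt n)
    have hR : s * lam2 * Real.sqrt n * (lamn * (V₀ * s) + lamn * s ^ 2 + p / Real.sqrt n)
        = V₀ * lamn * Real.sqrt n * (s ^ 2 * lam2) + s * lamn * Real.sqrt n * (s ^ 2 * lam2)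
          + s * lam2 * (p / Real.sqrt n * Real.sqrt n) := by ring
    rw [hR, hsp, hpn] at h
    linarith
  have key : s * (lam2 / lamn) * (Q / p - lamn / lam2 - 1 / Real.sqrt n) ≤ V₀ := by
    have hEq : s * (lam2 / lamn) * (Q / p - lamn / lam2 - 1 / Real.sqrt n)
        = (s * lam2 * Real.sqrt n * Q - s * lamn * Real.sqrt n * p - s * lam2 * p)
          / (lamn * Real.sqrt n * p) := by
      field_simp
    rw [hEq, div_le_iff₀ (by positivity)]
    nlinarith [main]
  refine ⟨key, le_trans ?_ key⟩
  have h4 : (1:ℝ) / Real.sqrt n ≤ 1 := by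
    rw [div_le_one hn0]; exact hsn
  have hEq2 : s * (lam2 / lamn) * (Q / p - lamn / lam2 - 1 / Real.sqrt n)
      - s * ((lam2 / lamn) * (Q / p - 1) - 1)
      = s * (lam2 / lamn) * (1 - 1 / Real.sqrt n) := by
    field_simp
    ring
  have hNN : 0 ≤ s * (lam2 / lamn) * (1 - 1 / Real.sqrt n) :=
    mul_nonneg (by positivity) (by linarith)
  linarith
end
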